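/- For a commutative ring R, the formal power series ring R[[x]] is weak von Neumann regular if and only if R has exactly two idempotent elements. -/

import Mathlib

/-- A commutative ring is weak von Neumann regular (WVNR) if for every pair of
finitely generated ideals `I ⊆ J ⊊ R`, if `J` is generated by an idempotent,
then so is `I`. -/
def IsWVNR (R : Type _) [CommRing R] : Prop :=
  ∀ I J : Ideal R, I.FG → J.FG → I ≤ J → J ≠ ⊤ →
    (∃ e : R, IsIdempotentElem e ∧ J = Ideal.span {e}) →
    ∃ f : R, IsIdempotentElem f ∧ I = Ideal.span {f}

/-- von Neumann regular: every `x` satisfies `x = x² y` for some `y`. -/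
def IsVNRegular (R : Type _) [CommRing R] : Prop :=
  ∀ x : R, ∃ y : R, x = x ^ 2 * y

/-- An idempotent power series with zero constant coefficient is zero. -/
lemma idem_cc_zero {R : Type _} [CommRing R] (f : PowerSeries R)
    (hf : IsIdempotentElem f) (h0 : PowerSeries.constantCoeff (R := R) f = 0) : f = 0 := by
  have hu : IsUnit (1 - f) := by
    rw [PowerSeries.isUnit_iff_constantCoeff]
    simp [h0]
  have hz : f * (1 - f) = 0 := by
    have h := hf
    unfold IsIdempotentElem at h
    linear_combination -h
  obtain ⟨u, hu⟩ := hu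
  have h2 := congrArg (· * (↑u⁻¹ : PowerSeries R)) hz
  simp only [zero_mul, mul_assoc, ← hu] at h2
  rwa [Units.mul_inv, mul_one] at h2

theorem stmt_16 (R : Type _) [CommRing R] [Nontrivial R] :
    IsWVNR (PowerSeries R) ↔ ∀ e : R, IsIdempotentElem e → e = 0 ∨ e = 1 := by
  constructor
  · intro h e he
    by_cases he1 : e = 1
    · right; exact he1
    left
    have hJ : Ideal.span {PowerSeries.C (R := R) e} ≠ (⊤ : Ideal (PowerSeries R)) := by
      intro htop
      have h1 : (1 : PowerSeries R) ∈ Ideal.span {PowerSeries.C (R := R) e} :=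
        htop ▸ Submodule.mem_top
      rw [Ideal.mem_span_singleton] at h1
      obtain ⟨g, hg⟩ := h1
      have hcc := congrArg (PowerSeries.constantCoeff (R := R)) hg
      simp only [map_one, map_mul, PowerSeries.constantCoeff_C] at hcc
      set g0 := PowerSeries.constantCoeff (R := R) g
      have h2 : e * g0 = 1 := hcc.symm
      apply he1
      calc e = e * (e * g0) := by rw [h2, mul_one]
        _ = (e * e) * g0 := by ring
        _ = e * g0 := by rw [he]
        _ = 1 := h2
    obtain ⟨f, hf, hIf⟩ := h (Ideal.span {PowerSeries.C (R := R) e * PowerSeries.X})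
      (Ideal.span {PowerSeries.C (R := R) e})
      ⟨{PowerSeries.C (R := R) e * PowerSeries.X}, by simp⟩
      ⟨{PowerSeries.C (R := R) e}, by simp⟩
      (by
        rw [Ideal.span_singleton_le_iff_mem, Ideal.mem_span_singleton]
        exact ⟨PowerSeries.X, rfl⟩)
      hJ ⟨PowerSeries.C (R := R) e, by simpa [IsIdempotentElem, ← map_mul] using congrArg (PowerSeries.C (R := R)) he, rfl⟩
    -- f has zero constant coefficient since f ∈ span {C e * X}
    have hfmem : f ∈ Ideal.span {PowerSeries.C (R := R) e * PowerSeries.X} := by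
      rw [hIf]; exact Ideal.mem_span_singleton_self f
    rw [Ideal.mem_span_singleton] at hfmem
    obtain ⟨g, hgf⟩ := hfmem
    have hf0 : PowerSeries.constantCoeff (R := R) f = 0 := by
      have := congrArg (PowerSeries.constantCoeff (R := R)) hgf
      simpa using this
    have hfz : f = 0 := idem_cc_zero f hf hf0
    -- then C e * X ∈ span {f} = 0
    have hmem : PowerSeries.C (R := R) e * PowerSeries.X ∈ Ideal.span {f} := by
      rw [← hIf]; exact Ideal.mem_span_singleton_self _
    rw [hfz, Ideal.span_singleton_eq_bot.mpr rfl, Ideal.mem_bot] at hmem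
    have := congrArg (PowerSeries.coeff (R := R) 1) hmem
    simpa using this
  · intro h
    rintro I J hI hJ hIJ hJtop ⟨e, he, hJe⟩
    have hcc : PowerSeries.constantCoeff (R := R) e = 0 ∨ PowerSeries.constantCoeff (R := R) e = 1 := by
      apply h
      have := congrArg (PowerSeries.constantCoeff (R := R)) he
      simpa [IsIdempotentElem, map_mul] using this
    have he01 : e = 0 ∨ e = 1 := by
      rcases hcc with h0 | h1
      · left; exact idem_cc_zero e he h0
      · right
        have h1f : IsIdempotentElem (1 - e) := he.one_sub
        have hz : (1 : PowerSeries R) - e = 0 := by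
          apply idem_cc_zero _ h1f
          simp [h1]
        linear_combination -hz
    rcases he01 with rfl | rfl
    · refine ⟨0, by simp [IsIdempotentElem], ?_⟩
      have hb : I ≤ Ideal.span {(0 : PowerSeries R)} := hJe ▸ hIJ
      rw [Ideal.span_singleton_eq_bot.mpr rfl] at hb ⊢
      exact le_bot_iff.mp hb
    · exact absurd (by simp [hJe, Ideal.span_singleton_one]) hJtop
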